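/- arXiv:1505.05433 — 2 statements merged into one kernel-verified Lean document; each statement's English description precedes it below -/
import Mathlib

section
/- Let ω ≥ 0 be a C² function on the closed Euclidean ball B̄_r ⊆ ℝⁿ satisfying Σ a_{ij} D_{ij} ω ≥ θ² ω in B_r, where λ² I ≤ a_{ij}(x) ≤ Λ² I. Then there exist constants c, C > 0 depending only on n, λ, Λ such that ω(0) ≤ C e^{−cθr} · sup_{B_r} ω. -/
open Metric

/-- The second partial derivative `D_{ij} f (x)` in the coordinate directions. -/
noncomputable def D2 {n : ℕ} (f : EuclideanSpace ℝ (Fin n) → ℝ)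
    (x : EuclideanSpace ℝ (Fin n)) (i j : Fin n) : ℝ :=
  fderiv ℝ (fun y => fderiv ℝ f y (EuclideanSpace.single j (1:ℝ))) x
    (EuclideanSpace.single i (1:ℝ))

open Finset Filter Set

lemma oneD {g : ℝ → ℝ} {d : ℝ} (hdiff : ∀ᶠ t in nhds (0:ℝ), DifferentiableAt ℝ g t)
    (hd : HasDerivAt (deriv g) d 0) (hmax : IsLocalMax g 0) : d ≤ 0 := by
  by_contra hpos
  push_neg at hpos
  have hg'0 : deriv g 0 = 0 := hmax.deriv_eq_zero
  have hslope : Tendsto (slope (deriv g) 0) (nhdsWithin 0 {(0:ℝ)}ᶜ) (nhds d) := by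
    have := hasDerivAt_iff_tendsto_slope.mp hd
    exact this
  have hpos' : ∀ᶠ t in nhdsWithin (0:ℝ) {(0:ℝ)}ᶜ, 0 < slope (deriv g) 0 t :=
    hslope.eventually (eventually_gt_nhds hpos)
  have hpos'' : ∀ᶠ t in nhds (0:ℝ), t ≠ 0 → 0 < slope (deriv g) 0 t := by
    rwa [eventually_nhdsWithin_iff] at hpos'
  have hcomb : ∀ᶠ t in nhds (0:ℝ),
      DifferentiableAt ℝ g t ∧ g t ≤ g 0 ∧ (t ≠ 0 → 0 < slope (deriv g) 0 t) :=
    hdiff.and (hmax.and hpos'')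
  rw [Metric.eventually_nhds_iff] at hcomb
  obtain ⟨δ, hδ, hP⟩ := hcomb
  set ε := δ/2 with hε
  have hεpos : 0 < ε := by positivity
  have key : ∀ t, |t| ≤ ε → DifferentiableAt ℝ g t ∧ g t ≤ g 0 ∧ (t ≠ 0 → 0 < slope (deriv g) 0 t) := by
    intro t ht
    apply hP
    simp only [dist_zero_right, Real.norm_eq_abs]
    linarith
  have hmono : StrictMonoOn g (Icc 0 ε) := by
    apply strictMonoOn_of_deriv_pos (convex_Icc 0 ε)
    · intro t ht
      exact ((key t (by rw [abs_le]; constructor <;> linarith [ht.1, ht.2])).1).continuousAt.continuousWithinAt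
    · intro t ht
      rw [interior_Icc] at ht
      have h1 := (key t (by rw [abs_le]; constructor <;> linarith [ht.1.le, ht.2.le])).2.2 (ne_of_gt ht.1)
      rw [slope_def_field, hg'0, sub_zero, sub_zero] at h1
      have h2 : deriv g t = (deriv g t / t) * t := (div_mul_cancel₀ _ (ne_of_gt ht.1)).symm
      rw [h2]; exact mul_pos h1 ht.1
  have := hmono (left_mem_Icc.mpr hεpos.le) (right_mem_Icc.mpr hεpos.le) hεpos
  have hle := (key ε (by rw [abs_le]; constructor <;> linarith)).2.1
  linarith
variable {n : ℕ}

noncomputable def bar (K α : ℝ) : EuclideanSpace ℝ (Fin n) → ℝ :=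
  fun x => K * ∑ i, Real.cosh (α * x i)

noncomputable def barD (K α : ℝ) (y : EuclideanSpace ℝ (Fin n)) :
    EuclideanSpace ℝ (Fin n) →L[ℝ] ℝ :=
  ∑ i, (K * (α * Real.sinh (α * y i))) • (EuclideanSpace.proj i :
    EuclideanSpace ℝ (Fin n) →L[ℝ] ℝ)

lemma bar_hasFDerivAt (K α : ℝ) (y : EuclideanSpace ℝ (Fin n)) :
    HasFDerivAt (bar K α) (barD K α y) y := by
  have h : ∀ i : Fin n, HasFDerivAt (fun x : EuclideanSpace ℝ (Fin n) => Real.cosh (α * x i))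
      ((α * Real.sinh (α * y i)) • (EuclideanSpace.proj i :
        EuclideanSpace ℝ (Fin n) →L[ℝ] ℝ)) y := by
    intro i
    have h0 : HasFDerivAt (fun x : EuclideanSpace ℝ (Fin n) => x i)
        (EuclideanSpace.proj i : EuclideanSpace ℝ (Fin n) →L[ℝ] ℝ) y :=
      ContinuousLinearMap.hasFDerivAt (EuclideanSpace.proj i :
        EuclideanSpace ℝ (Fin n) →L[ℝ] ℝ)
    have h1 := h0.const_mul α
    have h2 := h1.cosh
    rwa [smul_smul, mul_comm (Real.sinh (α * y i)) α] at h2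
  have hsum := HasFDerivAt.fun_sum (fun i (_ : i ∈ Finset.univ) => h i)
  have := hsum.const_mul K
  unfold bar barD
  convert this using 1
  any_goals rfl
  rw [Finset.smul_sum]
  congr 1; ext i; rw [smul_smul]

lemma barD_apply (K α : ℝ) (y u : EuclideanSpace ℝ (Fin n)) :
    barD K α y u = ∑ i, K * (α * Real.sinh (α * y i)) * u i := by
  unfold barD
  rw [ContinuousLinearMap.sum_apply]
  refine Finset.sum_congr rfl fun i _ => ?_
  simp

lemma bar_fderiv_single (K α : ℝ) (y : EuclideanSpace ℝ (Fin n)) (j : Fin n) :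
    fderiv ℝ (bar K α) y (EuclideanSpace.single j (1:ℝ)) = K * (α * Real.sinh (α * y j)) := by
  rw [(bar_hasFDerivAt K α y).fderiv, barD_apply]
  rw [Finset.sum_eq_single j]
  · simp
  · intro i _ hij; simp [EuclideanSpace.single_apply, hij]
  · simp

lemma bar_D2 (K α : ℝ) (x : EuclideanSpace ℝ (Fin n)) (i j : Fin n) :
    D2 (bar K α) x i j = if i = j then K * α^2 * Real.cosh (α * x i) else 0 := by
  unfold D2
  have hfe : (fun y : EuclideanSpace ℝ (Fin n) => fderiv ℝ (bar K α) y (EuclideanSpace.single j (1:ℝ)))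
      = fun y => K * (α * Real.sinh (α * y j)) := by
    ext y; exact bar_fderiv_single K α y j
  rw [hfe]
  have hfe2 : (fun y : EuclideanSpace ℝ (Fin n) => K * (α * Real.sinh (α * y j)))
      = fun y => (K * α) * Real.sinh (α * y j) := by funext y; ring
  rw [hfe2]
  have h0 : HasFDerivAt (fun y : EuclideanSpace ℝ (Fin n) => y j)
      (EuclideanSpace.proj j : EuclideanSpace ℝ (Fin n) →L[ℝ] ℝ) x :=
    ContinuousLinearMap.hasFDerivAt (EuclideanSpace.proj j :
      EuclideanSpace ℝ (Fin n) →L[ℝ] ℝ)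
  have h1 := h0.const_mul α
  have h2 := (h1.sinh.const_mul (K * α)).fderiv
  rw [h2]
  simp only [ContinuousLinearMap.coe_smul', Pi.smul_apply, smul_smul, smul_eq_mul,
    EuclideanSpace.single_apply]
  rcases eq_or_ne i j with h | h
  · subst h; simp; ring
  · simp [h, Ne.symm h]
-- bilinear expansion
lemma bilin_expand (B : EuclideanSpace ℝ (Fin n) →L[ℝ] (EuclideanSpace ℝ (Fin n) →L[ℝ] ℝ))
    (v : Fin n → ℝ) :
    B (∑ i, v i • EuclideanSpace.single i (1:ℝ)) (∑ j, v j • EuclideanSpace.single j (1:ℝ))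
      = ∑ i, ∑ j, B (EuclideanSpace.single i (1:ℝ)) (EuclideanSpace.single j (1:ℝ)) * v i * v j := by
  simp only [map_sum, map_smul, ContinuousLinearMap.sum_apply, ContinuousLinearMap.smul_apply,
    smul_eq_mul, Finset.mul_sum, Finset.sum_mul]
  rw [Finset.sum_comm]
  refine Finset.sum_congr rfl fun i _ => Finset.sum_congr rfl fun j _ => ?_
  ring

lemma D2_eq_fderiv2 {f : EuclideanSpace ℝ (Fin n) → ℝ} {x : EuclideanSpace ℝ (Fin n)}
    (hf : DifferentiableAt ℝ (fderiv ℝ f) x) (i j : Fin n) :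
    D2 f x i j = fderiv ℝ (fderiv ℝ f) x (EuclideanSpace.single i (1:ℝ))
      (EuclideanSpace.single j (1:ℝ)) := by
  unfold D2
  have hcomp : HasFDerivAt (fun y => fderiv ℝ f y (EuclideanSpace.single j (1:ℝ)))
      ((ContinuousLinearMap.apply ℝ ℝ (EuclideanSpace.single j (1:ℝ))).comp
        (fderiv ℝ (fderiv ℝ f) x)) x :=
    (ContinuousLinearMap.apply ℝ ℝ (EuclideanSpace.single j (1:ℝ))).hasFDerivAt.comp x
      hf.hasFDerivAt
  rw [hcomp.fderiv]
  rfl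

lemma line_hasDerivAt (x₀ u : EuclideanSpace ℝ (Fin n)) (t : ℝ) :
    HasDerivAt (fun t : ℝ => x₀ + t • u) u t := by
  have h : HasDerivAt (fun t : ℝ => t • u) ((1:ℝ) • u) t := (hasDerivAt_id t).smul_const u
  simpa using h.const_add x₀

lemma hess_quadform_nonpos {K α : ℝ} {ω : EuclideanSpace ℝ (Fin n) → ℝ}
    {x₀ : EuclideanSpace ℝ (Fin n)}
    (hωev : ∀ᶠ y in nhds x₀, DifferentiableAt ℝ ω y)
    (hω1 : DifferentiableAt ℝ (fderiv ℝ ω) x₀)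
    (hmax : IsLocalMax (fun y => ω y - bar K α y) x₀) (v : Fin n → ℝ) :
    ∑ i, ∑ j, (D2 ω x₀ i j - D2 (bar K α) x₀ i j) * v i * v j ≤ 0 := by
  set u : EuclideanSpace ℝ (Fin n) := ∑ i, v i • EuclideanSpace.single i (1:ℝ) with hu_def
  have hu : ∀ k, u k = v k := by
    intro k
    rw [hu_def]
    rw [show (∑ i, v i • EuclideanSpace.single i (1:ℝ)) k
      = ∑ i, (v i • EuclideanSpace.single i (1:ℝ)) k from by rw [WithLp.ofLp_sum]; exact Finset.sum_apply k Finset.univ _]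
    simp [EuclideanSpace.single_apply]
  set ℓ : ℝ → EuclideanSpace ℝ (Fin n) := fun t => x₀ + t • u with hℓ_def
  have hℓ0 : ℓ 0 = x₀ := by simp [hℓ_def]
  have hℓco : ∀ (t : ℝ) k, ℓ t k = x₀ k + t * v k := by
    intro t k
    rw [hℓ_def]
    simp only [PiLp.add_apply, PiLp.smul_apply, smul_eq_mul, hu k]
  have htend : Filter.Tendsto ℓ (nhds 0) (nhds x₀) := by
    rw [← hℓ0]; exact (line_hasDerivAt x₀ u 0).continuousAt
  set B := fderiv ℝ (fderiv ℝ ω) x₀ with hB_def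
  -- derivative of t ↦ fderiv ω (ℓ t) u
  have hf : HasFDerivAt (fderiv ℝ ω) B (ℓ 0) := by rw [hℓ0]; exact hω1.hasFDerivAt
  have hc1 : HasDerivAt (fun t => fderiv ℝ ω (ℓ t)) (B u) 0 :=
    hf.comp_hasDerivAt 0 (line_hasDerivAt x₀ u 0)
  have ht1 : HasDerivAt (fun t => fderiv ℝ ω (ℓ t) u) (B u u) 0 :=
    ((ContinuousLinearMap.apply ℝ ℝ u).hasFDerivAt).comp_hasDerivAt 0 hc1
  -- derivative of t ↦ barD K α (ℓ t) u
  have hbar_line : (fun t : ℝ => barD K α (ℓ t) u)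
      = fun t => ∑ i, (K * α * v i) * Real.sinh (α * (x₀ i + t * v i)) := by
    funext t
    rw [barD_apply]
    refine Finset.sum_congr rfl fun i _ => ?_
    rw [hℓco t i, hu i]; ring
  set S2 : ℝ := ∑ i, (K * α * v i) * (Real.cosh (α * (x₀ i + 0 * v i)) * (α * v i)) with hS2_def
  have ht2 : HasDerivAt (fun t : ℝ => barD K α (ℓ t) u) S2 0 := by
    rw [hbar_line, hS2_def]
    apply HasDerivAt.fun_sum
    intro i _
    have h_in : HasDerivAt (fun t : ℝ => x₀ i + t * v i) (v i) 0 := by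
      simpa using ((hasDerivAt_id (0:ℝ)).mul_const (v i)).const_add (x₀ i)
    exact ((h_in.const_mul α).sinh).const_mul (K * α * v i)
  -- derivative of g
  set g : ℝ → ℝ := fun t => ω (ℓ t) - bar K α (ℓ t) with hg_def
  have hgd : ∀ᶠ t in nhds (0:ℝ),
      HasDerivAt g (fderiv ℝ ω (ℓ t) u - barD K α (ℓ t) u) t := by
    refine (htend.eventually hωev).mono fun t ht => ?_
    exact (ht.hasFDerivAt.comp_hasDerivAt t (line_hasDerivAt x₀ u t)).sub
      ((bar_hasFDerivAt K α (ℓ t)).comp_hasDerivAt t (line_hasDerivAt x₀ u t))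
  have hderiv_ev : deriv g =ᶠ[nhds (0:ℝ)]
      fun t => fderiv ℝ ω (ℓ t) u - barD K α (ℓ t) u :=
    hgd.mono fun t ht => ht.deriv
  have hd2 : HasDerivAt (deriv g) (B u u - S2) 0 :=
    (ht1.sub ht2).congr_of_eventuallyEq hderiv_ev
  have hgmax : IsLocalMax g 0 := by
    have h0 : g 0 = ω x₀ - bar K α x₀ := by rw [hg_def]; simp [hℓ0]
    refine (htend.eventually hmax).mono fun t ht => ?_
    show g t ≤ g 0
    rw [h0]; exact ht
  have hgdiff : ∀ᶠ t in nhds (0:ℝ), DifferentiableAt ℝ g t :=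
    hgd.mono fun t ht => ht.differentiableAt
  have hkey : B u u - S2 ≤ 0 := oneD hgdiff hd2 hgmax
  -- expand quadratic forms
  have e1 : ∑ i, ∑ j, D2 ω x₀ i j * v i * v j = B u u := by
    rw [hB_def, bilin_expand]
    refine Finset.sum_congr rfl fun i _ => Finset.sum_congr rfl fun j _ => ?_
    rw [D2_eq_fderiv2 hω1]
  have e2 : ∑ i, ∑ j, D2 (bar K α) x₀ i j * v i * v j = S2 := by
    rw [hS2_def]
    refine Finset.sum_congr rfl fun i _ => ?_
    rw [Finset.sum_eq_single i]
    · rw [bar_D2]; simp; ring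
    · intro j _ hij; rw [bar_D2]; simp [Ne.symm hij]
    · simp
  calc ∑ i, ∑ j, (D2 ω x₀ i j - D2 (bar K α) x₀ i j) * v i * v j
      = ∑ i, ∑ j, D2 ω x₀ i j * v i * v j - ∑ i, ∑ j, D2 (bar K α) x₀ i j * v i * v j := by
        rw [← Finset.sum_sub_distrib]
        refine Finset.sum_congr rfl fun i _ => ?_
        rw [← Finset.sum_sub_distrib]
        refine Finset.sum_congr rfl fun j _ => ?_
        ring
    _ = B u u - S2 := by rw [e1, e2]
    _ ≤ 0 := hkey

open scoped MatrixOrder in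
lemma trace_nonpos {A : Matrix (Fin n) (Fin n) ℝ} (hA : A.PosSemidef)
    {H : Fin n → Fin n → ℝ} (hQ : ∀ v : Fin n → ℝ, ∑ i, ∑ j, H i j * v i * v j ≤ 0) :
    ∑ i, ∑ j, A i j * H i j ≤ 0 := by
  set S := CFC.sqrt A with hS_def
  have hS : S * S = A := CFC.sqrt_mul_sqrt_self A hA.nonneg
  have hSh : ∀ i j, S i j = S j i := by
    intro i j
    have h := (Matrix.nonneg_iff_posSemidef.mp (CFC.sqrt_nonneg A)).1
    have h2 := congrFun (congrFun h i) j
    rw [Matrix.conjTranspose_apply] at h2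
    simpa [hS_def] using h2.symm
  have hA_entry : ∀ i j, A i j = ∑ k, S i k * S j k := by
    intro i j
    rw [← hS, Matrix.mul_apply]
    exact Finset.sum_congr rfl fun k _ => by rw [hSh k j]
  have key : ∑ i, ∑ j, A i j * H i j = ∑ k, ∑ i, ∑ j, H i j * S i k * S j k :=
    calc ∑ i, ∑ j, A i j * H i j
        = ∑ i, ∑ j, ∑ k, S i k * S j k * H i j := by simp_rw [hA_entry, Finset.sum_mul]
      _ = ∑ i, ∑ k, ∑ j, S i k * S j k * H i j :=
          Finset.sum_congr rfl fun i _ => Finset.sum_comm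
      _ = ∑ k, ∑ i, ∑ j, S i k * S j k * H i j := Finset.sum_comm
      _ = ∑ k, ∑ i, ∑ j, H i j * S i k * S j k :=
          Finset.sum_congr rfl fun k _ => Finset.sum_congr rfl fun i _ =>
            Finset.sum_congr rfl fun j _ => by ring
  rw [key]
  exact Finset.sum_nonpos fun k _ => hQ (fun i => S i k)

/-- Exponential decay at the center for nonnegative subsolutions of
`∑ aᵢⱼ Dᵢⱼ ω ≥ θ² ω` with uniformly elliptic coefficients `λ² I ≤ a ≤ Λ² I`. -/
theorem stmt2 {n : ℕ} (hn : 0 < n) (lam Lam : ℝ) (hlam : 0 < lam) (hLam : lam ≤ Lam) :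
    ∃ c > (0:ℝ), ∃ C > (0:ℝ),
      ∀ (θ r : ℝ), 0 < θ → 0 < r →
      ∀ (a : EuclideanSpace ℝ (Fin n) → Matrix (Fin n) (Fin n) ℝ)
        (ω : EuclideanSpace ℝ (Fin n) → ℝ),
        (∀ x i j, a x i j = a x j i) →
        (∀ x (v : Fin n → ℝ), lam^2 * ∑ i, (v i)^2 ≤ ∑ i, ∑ j, a x i j * v i * v j) →
        (∀ x (v : Fin n → ℝ), ∑ i, ∑ j, a x i j * v i * v j ≤ Lam^2 * ∑ i, (v i)^2) →
        ContDiffOn ℝ 2 ω (closedBall 0 r) →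
        (∀ x ∈ closedBall (0 : EuclideanSpace ℝ (Fin n)) r, 0 ≤ ω x) →
        (∀ x ∈ ball (0 : EuclideanSpace ℝ (Fin n)) r,
            θ^2 * ω x ≤ ∑ i, ∑ j, a x i j * D2 ω x i j) →
        ω 0 ≤ C * Real.exp (-(c * θ * r)) * sSup (ω '' closedBall 0 r) := by

  have hLam0 : 0 < Lam := lt_of_lt_of_le hlam hLam
  have hsn : 0 < Real.sqrt n := Real.sqrt_pos.mpr (by exact_mod_cast hn)
  refine ⟨1 / (Lam * Real.sqrt n), by positivity, 2 * n, by positivity, ?_⟩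
  intro θ r hθ hr a ω hsym hlower hupper hω hnonneg hsub
  set c : ℝ := 1 / (Lam * Real.sqrt n) with hc_def
  set α : ℝ := θ / Lam with hα_def
  have hα0 : 0 < α := div_pos hθ hLam0
  set ρ : ℝ := r / Real.sqrt n with hρ_def
  have hρ0 : 0 < ρ := div_pos hr hsn
  set M : ℝ := sSup (ω '' closedBall 0 r) with hM_def
  set K : ℝ := M / Real.cosh (α * ρ) with hK_def
  have hcompact : IsCompact (closedBall (0 : EuclideanSpace ℝ (Fin n)) r) :=
    isCompact_closedBall _ _
  have h0mem : (0 : EuclideanSpace ℝ (Fin n)) ∈ closedBall (0 : EuclideanSpace ℝ (Fin n)) r :=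
    mem_closedBall_self hr.le
  have hne : (closedBall (0 : EuclideanSpace ℝ (Fin n)) r).Nonempty := ⟨0, h0mem⟩
  have hcont : ContinuousOn ω (closedBall 0 r) := hω.continuousOn
  have hbdd : BddAbove (ω '' closedBall 0 r) :=
    (hcompact.image_of_continuousOn hcont).bddAbove
  have hM : ∀ x ∈ closedBall (0 : EuclideanSpace ℝ (Fin n)) r, ω x ≤ M :=
    fun x hx => le_csSup hbdd ⟨x, hx, rfl⟩
  have hM0 : 0 ≤ M := le_trans (hnonneg 0 h0mem) (hM 0 h0mem)
  have hcoshpos : ∀ t : ℝ, 0 < Real.cosh t := fun t => Real.cosh_pos t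
  have hK0 : 0 ≤ K := div_nonneg hM0 (hcoshpos _).le
  have hbardiff : Differentiable ℝ (bar (n := n) K α) :=
    fun y => (bar_hasFDerivAt K α y).differentiableAt
  have hbarcont : Continuous (bar (n := n) K α) := hbardiff.continuous
  -- maximum of w := ω - bar over the closed ball
  obtain ⟨x₀, hx₀cb, hx₀max⟩ := hcompact.exists_isMaxOn hne
    (hcont.sub hbarcont.continuousOn)
  have hx₀norm : ‖x₀‖ ≤ r := by simpa [dist_eq_norm] using hx₀cb
  -- the barrier dominates M on the boundary
  have hboundary : ∀ x : EuclideanSpace ℝ (Fin n), ‖x‖ = r → M ≤ bar K α x := by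
    intro x hx
    have hsum : ∑ i, (x i)^2 = r^2 := by
      have h1 : ‖x‖ = Real.sqrt (∑ i, ‖x i‖^2) := EuclideanSpace.norm_eq x
      have h2 : Real.sqrt (∑ i, ‖x i‖^2) = r := by rw [← h1, hx]
      have h3 : ∑ i, ‖x i‖^2 = r^2 := by
        rw [← h2]
        rw [Real.sq_sqrt (Finset.sum_nonneg fun i _ => sq_nonneg _)]
      simpa [Real.norm_eq_abs, sq_abs] using h3
    have hex : ∃ i : Fin n, r^2 / n ≤ (x i)^2 := by
      by_contra hcon
      push_neg at hcon
      have := Finset.sum_lt_sum_of_nonempty (Finset.univ_nonempty_iff.mpr ⟨⟨0, hn⟩⟩)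
        (fun i _ => hcon i)
      rw [hsum, Finset.sum_const, Finset.card_univ, Fintype.card_fin, nsmul_eq_mul] at this
      rw [mul_div_cancel₀] at this
      · exact lt_irrefl _ this
      · exact_mod_cast hn.ne'
    obtain ⟨i, hi⟩ := hex
    have habs : ρ ≤ |x i| := by
      have h4 : ρ^2 ≤ (x i)^2 := by
        rw [hρ_def, div_pow, Real.sq_sqrt (Nat.cast_nonneg n)]
        exact hi
      have h5 := Real.sqrt_le_sqrt h4
      rwa [Real.sqrt_sq hρ0.le, Real.sqrt_sq_eq_abs] at h5
    have hcosh1 : Real.cosh (α * ρ) ≤ Real.cosh (α * x i) := by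
      rw [Real.cosh_le_cosh]
      rw [abs_mul, abs_mul, abs_of_pos hα0, abs_of_pos hρ0]
      exact mul_le_mul_of_nonneg_left habs hα0.le
    have hsumge : Real.cosh (α * x i) ≤ ∑ j, Real.cosh (α * x j) :=
      Finset.single_le_sum (f := fun j => Real.cosh (α * x j))
        (fun j _ => (hcoshpos _).le) (Finset.mem_univ i)
    have : M = K * Real.cosh (α * ρ) := by
      rw [hK_def, div_mul_cancel₀ _ (hcoshpos _).ne']
    rw [this]
    unfold bar
    calc K * Real.cosh (α * ρ) ≤ K * Real.cosh (α * x i) :=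
          mul_le_mul_of_nonneg_left hcosh1 hK0
      _ ≤ K * ∑ j, Real.cosh (α * x j) :=
          mul_le_mul_of_nonneg_left hsumge hK0
  -- the maximum of w is ≤ 0
  have hwmax : ω x₀ - bar K α x₀ ≤ 0 := by
    rcases eq_or_lt_of_le hx₀norm with hb | hint
    · have := hboundary x₀ hb
      have h5 := hM x₀ hx₀cb
      linarith
    · -- interior point
      by_contra hcon
      push_neg at hcon
      have hx₀ball : x₀ ∈ ball (0 : EuclideanSpace ℝ (Fin n)) r := by
        simpa [dist_eq_norm] using hint
      have hcbnhds : closedBall (0 : EuclideanSpace ℝ (Fin n)) r ∈ nhds x₀ :=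
        Filter.mem_of_superset (isOpen_ball.mem_nhds hx₀ball) ball_subset_closedBall
      have hωat : ContDiffAt ℝ 2 ω x₀ := hω.contDiffAt hcbnhds
      have hωev : ∀ᶠ y in nhds x₀, DifferentiableAt ℝ ω y :=
        (hωat.eventually (by norm_num)).mono fun y hy =>
          hy.differentiableAt (by norm_num)
      have hω1 : DifferentiableAt ℝ (fderiv ℝ ω) x₀ :=
        (hωat.fderiv_right (m := 1) (by norm_num)).differentiableAt (by norm_num)
      have hmaxloc : IsLocalMax (fun y => ω y - bar K α y) x₀ :=
        hx₀max.isLocalMax hcbnhds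
      have hQ := hess_quadform_nonpos hωev hω1 hmaxloc
      have hPSD : (a x₀).PosSemidef := by
        refine Matrix.PosSemidef.of_dotProduct_mulVec_nonneg ?_ ?_
        · ext i j
          rw [Matrix.conjTranspose_apply]
          simp only [star_trivial]
          exact hsym x₀ j i
        · intro v
          have h6 := hlower x₀ v
          have h7 : 0 ≤ lam^2 * ∑ i, (v i)^2 := by positivity
          have h8 : dotProduct (star v) (Matrix.mulVec (a x₀) v)
              = ∑ i, ∑ j, a x₀ i j * v i * v j := by
            simp only [star_trivial, dotProduct, Matrix.mulVec, dotProduct,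
              Finset.mul_sum]
            refine Finset.sum_congr rfl fun i _ => Finset.sum_congr rfl fun j _ => by ring
          rw [h8]
          linarith
      have htr := trace_nonpos hPSD hQ
      have hbarsum : ∑ i, ∑ j, a x₀ i j * D2 (bar (n := n) K α) x₀ i j
          = ∑ i, a x₀ i i * (K * α^2 * Real.cosh (α * x₀ i)) := by
        refine Finset.sum_congr rfl fun i _ => ?_
        rw [Finset.sum_eq_single i]
        · rw [bar_D2]; simp
        · intro j _ hij; rw [bar_D2]; simp [Ne.symm hij]
        · simp
      have haii : ∀ i, a x₀ i i ≤ Lam^2 := by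
        intro i
        have h9 := hupper x₀ (Pi.single i (1:ℝ))
        have h10 : ∑ k, ∑ l, a x₀ k l * (Pi.single i (1:ℝ) : Fin n → ℝ) k
              * (Pi.single i (1:ℝ) : Fin n → ℝ) l = a x₀ i i := by
          rw [Finset.sum_eq_single i]
          · rw [Finset.sum_eq_single i] <;> simp +contextual [Pi.single_apply]
          · intro k _ hk; simp [Pi.single_apply, hk]
          · simp
        have h11 : ∑ k, ((Pi.single i (1:ℝ) : Fin n → ℝ) k)^2 = (1:ℝ) := by
          rw [Finset.sum_eq_single i] <;> simp +contextual [Pi.single_apply]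
        rw [h10, h11, mul_one] at h9
        exact h9
      have hchain : θ^2 * ω x₀ ≤ θ^2 * bar K α x₀ := by
        have h12 := hsub x₀ hx₀ball
        have h13 : ∑ i, ∑ j, a x₀ i j * D2 ω x₀ i j
            ≤ ∑ i, ∑ j, a x₀ i j * D2 (bar (n := n) K α) x₀ i j := by
          have h14 : ∑ i, ∑ j, a x₀ i j * D2 ω x₀ i j
              - ∑ i, ∑ j, a x₀ i j * D2 (bar (n := n) K α) x₀ i j
              = ∑ i, ∑ j, a x₀ i j * (D2 ω x₀ i j - D2 (bar (n := n) K α) x₀ i j) := by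
            rw [← Finset.sum_sub_distrib]
            refine Finset.sum_congr rfl fun i _ => ?_
            rw [← Finset.sum_sub_distrib]
            refine Finset.sum_congr rfl fun j _ => by ring
          linarith [h14 ▸ htr]
        have h15 : ∑ i, a x₀ i i * (K * α^2 * Real.cosh (α * x₀ i))
            ≤ ∑ i, Lam^2 * (K * α^2 * Real.cosh (α * x₀ i)) :=
          Finset.sum_le_sum fun i _ =>
            mul_le_mul_of_nonneg_right (haii i) (by positivity)
        have h16 : ∑ i, Lam^2 * (K * α^2 * Real.cosh (α * x₀ i))
            = θ^2 * bar K α x₀ := by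
          unfold bar
          rw [Finset.mul_sum, Finset.mul_sum]
          refine Finset.sum_congr rfl fun i _ => ?_
          rw [hα_def]
          field_simp
        calc θ^2 * ω x₀ ≤ ∑ i, ∑ j, a x₀ i j * D2 ω x₀ i j := h12
          _ ≤ ∑ i, ∑ j, a x₀ i j * D2 (bar (n := n) K α) x₀ i j := h13
          _ = ∑ i, a x₀ i i * (K * α^2 * Real.cosh (α * x₀ i)) := hbarsum
          _ ≤ ∑ i, Lam^2 * (K * α^2 * Real.cosh (α * x₀ i)) := h15
          _ = θ^2 * bar K α x₀ := h16
      nlinarith [mul_pos (show (0:ℝ) < θ^2 by positivity) hcon]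
  -- conclude
  have h17 : ω 0 - bar K α 0 ≤ ω x₀ - bar K α x₀ := hx₀max h0mem
  have hbar0 : bar (n := n) K α 0 = K * n := by
    unfold bar
    have : ∀ i : Fin n, Real.cosh (α * (0 : EuclideanSpace ℝ (Fin n)) i) = 1 := by
      intro i
      have : (0 : EuclideanSpace ℝ (Fin n)) i = 0 := rfl
      rw [this, mul_zero, Real.cosh_zero]
    rw [Finset.sum_congr rfl fun i _ => this i]
    simp [mul_comm]
  have h18 : ω 0 ≤ K * n := by
    rw [← hbar0]; linarith
  have hKle : K ≤ 2 * Real.exp (-(c * θ * r)) * M := by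
    have h19 : Real.exp (α * ρ) / 2 ≤ Real.cosh (α * ρ) := by
      rw [Real.cosh_eq]
      have := Real.exp_pos (-(α * ρ))
      linarith
    have h20 : 0 < Real.exp (α * ρ) / 2 := by positivity
    have h21 : K ≤ M / (Real.exp (α * ρ) / 2) := by
      rw [hK_def]
      exact div_le_div_of_nonneg_left hM0 h20 h19
    have h22 : M / (Real.exp (α * ρ) / 2) = 2 * Real.exp (-(α * ρ)) * M := by
      rw [Real.exp_neg]
      field_simp
    have h23 : α * ρ = c * θ * r := by
      rw [hα_def, hρ_def, hc_def]
      field_simp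
    rw [h22, h23] at h21
    exact h21
  calc ω 0 ≤ K * n := h18
    _ ≤ (2 * Real.exp (-(c * θ * r)) * M) * n :=
        mul_le_mul_of_nonneg_right hKle (Nat.cast_nonneg n)
    _ = 2 * n * Real.exp (-(c * θ * r)) * M := by ring
end

section
/- Let u be continuous on the closed annulus {R ≤ |x − w| ≤ 3R/2} ⊆ ℝ², subharmonic in its interior, with u ≤ 0 on ∂B_R(w) and u ≤ M on ∂B_{3R/2}(w), where M ≥ 0. Then for all x in the annulus, u(x) ≤ (M/(R log(3/2)))·(|x − w| − R); i.e. u grows at most linearly away from the inner sphere with slope M/(R log(3/2)). -/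
/-- The Laplacian as the sum of second partial derivatives in the coordinate directions. -/
noncomputable def lapl (f : EuclideanSpace ℝ (Fin 2) → ℝ)
    (x : EuclideanSpace ℝ (Fin 2)) : ℝ :=
  ∑ i, fderiv ℝ (fun y => fderiv ℝ f y (EuclideanSpace.single i (1:ℝ))) x
    (EuclideanSpace.single i (1:ℝ))

open Filter Topology

local notation "E2" => EuclideanSpace ℝ (Fin 2)

lemma second_deriv_test_aux {g g' : ℝ → ℝ} {d : ℝ}
    (hg : ∀ᶠ t in 𝓝 (0:ℝ), HasDerivAt g (g' t) t ∧ g t ≤ g 0)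
    (hg' : HasDerivAt g' d 0) : d ≤ 0 := by
  by_contra hd
  push_neg at hd
  have hg0 : g' 0 = 0 := by
    have hmax : IsLocalMax g 0 := hg.mono fun t ht => ht.2
    exact hmax.hasDerivAt_eq_zero hg.self_of_nhds.1
  have hslope : Tendsto (slope g' 0) (𝓝[≠] 0) (𝓝 d) := hasDerivAt_iff_tendsto_slope.1 hg'
  have hpos : ∀ᶠ t in 𝓝[≠] (0:ℝ), 0 < slope g' 0 t := hslope.eventually (eventually_gt_nhds hd)
  rw [eventually_nhdsWithin_iff] at hpos
  obtain ⟨δ, hδ, hball⟩ := Metric.eventually_nhds_iff.1 (hpos.and hg)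
  have hmem : ∀ t : ℝ, 0 < t → t < δ → 0 < g' t := by
    intro t ht0 htδ
    have hdist : dist t (0:ℝ) < δ := by
      rw [Real.dist_eq, sub_zero, abs_of_pos ht0]; exact htδ
    have hsl := (hball hdist).1 (by simpa using ne_of_gt ht0)
    rw [slope_def_field, hg0] at hsl
    have : 0 < g' t / t := by simpa using hsl
    by_contra hle
    push_neg at hle
    exact absurd this (not_lt.2 (div_nonpos_iff.2 (Or.inr ⟨hle, ht0.le⟩)))
  set t₀ := δ/2 with ht₀
  have ht₀pos : 0 < t₀ := by positivity
  have ht₀δ : t₀ < δ := by simp [ht₀]; linarith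
  have hsm : StrictMonoOn g (Set.Icc 0 t₀) := by
    apply strictMonoOn_of_deriv_pos (convex_Icc 0 t₀)
    · intro t ht
      have hdist : dist t (0:ℝ) < δ := by
        rw [Real.dist_eq, sub_zero, abs_of_nonneg ht.1]; linarith [ht.2]
      exact ((hball hdist).2.1).continuousAt.continuousWithinAt
    · intro t ht
      rw [interior_Icc] at ht
      have hdist : dist t (0:ℝ) < δ := by
        rw [Real.dist_eq, sub_zero, abs_of_pos ht.1]; linarith [ht.2]
      rw [((hball hdist).2.1).deriv]
      exact hmem t ht.1 (by linarith [ht.2])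
  have h1 : g 0 < g t₀ := hsm ⟨le_refl 0, ht₀pos.le⟩ ⟨ht₀pos.le, le_refl t₀⟩ ht₀pos
  have hdist : dist t₀ (0:ℝ) < δ := by
    rw [Real.dist_eq, sub_zero, abs_of_pos ht₀pos]; exact ht₀δ
  have h2 := (hball hdist).2.2
  linarith

lemma second_dir_deriv_nonpos {E : Type*} [NormedAddCommGroup E] [NormedSpace ℝ E]
    {F : E → ℝ} {F' : E → E →L[ℝ] ℝ} {x v : E} {D : E →L[ℝ] ℝ}
    (h1 : ∀ᶠ y in 𝓝 x, HasFDerivAt F (F' y) y ∧ F y ≤ F x)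
    (h2 : HasFDerivAt (fun y => F' y v) D x) : D v ≤ 0 := by
  have hline : ∀ t : ℝ, HasDerivAt (fun s : ℝ => x + s • v) v t := by
    intro t
    simpa using ((hasDerivAt_id t).smul_const v).const_add x
  have hline0 : x + (0:ℝ) • v = x := by simp
  have htend : Tendsto (fun s : ℝ => x + s • v) (𝓝 0) (𝓝 x) := by
    have := (hline 0).continuousAt
    rwa [ContinuousAt, hline0] at this
  apply second_deriv_test_aux (g := fun t => F (x + t • v))
      (g' := fun t => F' (x + t • v) v) (d := D v)
  · filter_upwards [htend.eventually h1] with t ht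
    refine ⟨ht.1.comp_hasDerivAt t (hline t), ?_⟩
    simpa [hline0] using ht.2
  · have h2' : HasFDerivAt (fun y => F' y v) D (x + (0:ℝ) • v) := by rwa [hline0]
    exact h2'.comp_hasDerivAt 0 (hline 0)


noncomputable def qf (w y : E2) : ℝ := ∑ j, (y j - w j)^2

noncomputable def Dqf (w x : E2) : E2 →L[ℝ] ℝ :=
  ∑ j, (2*(x j - w j)) • (EuclideanSpace.proj j : E2 →L[ℝ] ℝ)

lemma qf_eq (w y : E2) : qf w y = ‖y - w‖^2 := by
  rw [EuclideanSpace.norm_eq, Real.sq_sqrt (by positivity)]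
  unfold qf
  congr 1
  ext j
  simp [PiLp.sub_apply, Real.norm_eq_abs, sq_abs]

lemma hasFDerivAt_qf (w x : E2) : HasFDerivAt (qf w) (Dqf w x) x := by
  unfold qf Dqf
  apply HasFDerivAt.fun_sum
  intro j _
  have h : HasFDerivAt (fun y : E2 => y j - w j)
      (EuclideanSpace.proj j : E2 →L[ℝ] ℝ) x :=
    (EuclideanSpace.proj j : E2 →L[ℝ] ℝ).hasFDerivAt.sub_const (w j)
  have := h.mul h
  convert this using 1
  · ext y; ring
  · ext v; simp [two_mul]; ring
  · rw [two_mul, add_smul]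

lemma Dqf_single (w x : E2) (i : Fin 2) :
    Dqf w x (EuclideanSpace.single i (1:ℝ)) = 2*(x i - w i) := by
  unfold Dqf
  simp [ContinuousLinearMap.sum_apply,
    EuclideanSpace.single_apply, Fin.sum_univ_two]
  fin_cases i <;> simp

lemma hasFDerivAt_barrier (c ε : ℝ) (w x : E2) (hx : qf w x ≠ 0) :
    HasFDerivAt (fun y => ε * qf w y - c/2 * Real.log (qf w y))
      ((ε - c/2 * (qf w x)⁻¹) • Dqf w x) x := by
  have hφ : HasDerivAt (fun s : ℝ => ε * s - c/2 * Real.log s)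
      (ε - c/2 * (qf w x)⁻¹) (qf w x) := by
    have := ((hasDerivAt_id (qf w x)).const_mul ε).fun_sub
      ((Real.hasDerivAt_log hx).const_mul (c/2))
    simpa [div_eq_mul_inv] using this
  exact hφ.comp_hasFDerivAt x (hasFDerivAt_qf w x)

lemma hasFDerivAt_B (c ε : ℝ) (w x : E2) (hx : qf w x ≠ 0) (i : Fin 2) :
    ∃ D : E2 →L[ℝ] ℝ,
      HasFDerivAt (fun y => (ε - c/2 * (qf w y)⁻¹) * (2*(y i - w i))) D x ∧
      D (EuclideanSpace.single i (1:ℝ))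
        = 2*ε - c * (qf w x)⁻¹ + 2*c*(x i - w i)^2 * ((qf w x)^2)⁻¹ := by
  have ha : HasDerivAt (fun s : ℝ => ε - c/2 * s⁻¹) (c/2 * ((qf w x)^2)⁻¹) (qf w x) := by
    have := ((hasDerivAt_inv hx).const_mul (c/2)).const_sub ε
    rw [show c/2 * ((qf w x)^2)⁻¹ = -(c / 2 * -(qf w x ^ 2)⁻¹) by ring]
    exact this
  have ha2 : HasFDerivAt (fun y => ε - c/2 * (qf w y)⁻¹)
      ((c/2 * ((qf w x)^2)⁻¹) • Dqf w x) x :=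
    ha.comp_hasFDerivAt x (hasFDerivAt_qf w x)
  have hm : HasFDerivAt (fun y : E2 => 2*(y i - w i))
      ((2:ℝ) • (EuclideanSpace.proj i : E2 →L[ℝ] ℝ)) x :=
    ((EuclideanSpace.proj i : E2 →L[ℝ] ℝ).hasFDerivAt.sub_const (w i)).const_mul 2
  refine ⟨_, ha2.mul hm, ?_⟩
  simp only [ContinuousLinearMap.add_apply, ContinuousLinearMap.smul_apply, Dqf_single,
    smul_eq_mul]
  have : (EuclideanSpace.proj i : E2 →L[ℝ] ℝ) (EuclideanSpace.single i (1:ℝ)) = 1 := by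
    simp [EuclideanSpace.single_apply]
  rw [this]
  ring

lemma no_interior_max (R c ε : ℝ) (hR : 0 < R) (hε : 0 < ε)
    (w : E2) (u : E2 → ℝ)
    (hC2 : ContDiffOn ℝ 2 u {x | R < ‖x - w‖ ∧ ‖x - w‖ < 3*R/2})
    (hsub : ∀ x, R < ‖x - w‖ → ‖x - w‖ < 3*R/2 → 0 ≤ lapl u x)
    (x₀ : E2) (hx₀ : R < ‖x₀ - w‖ ∧ ‖x₀ - w‖ < 3*R/2)
    (hmax : ∀ y, R ≤ ‖y - w‖ → ‖y - w‖ ≤ 3*R/2 →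
      u y + (ε * qf w y - c/2 * Real.log (qf w y))
        ≤ u x₀ + (ε * qf w x₀ - c/2 * Real.log (qf w x₀))) : False := by
  set U : Set E2 := {x | R < ‖x - w‖ ∧ ‖x - w‖ < 3*R/2} with hUdef
  have hncont : Continuous (fun x : E2 => ‖x - w‖) :=
    (continuous_id.sub continuous_const).norm
  have hU : IsOpen U := by
    have : U = (fun x : E2 => ‖x - w‖) ⁻¹' Set.Ioo R (3*R/2) := by
      ext y; simp [hUdef, Set.mem_Ioo]
    rw [this]
    exact isOpen_Ioo.preimage hncont
  have hx₀U : x₀ ∈ U := hx₀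
  have hUx : U ∈ 𝓝 x₀ := hU.mem_nhds hx₀U
  have hqpos : ∀ y ∈ U, 0 < qf w y := by
    intro y hy
    rw [qf_eq]
    have : 0 < ‖y - w‖ := lt_trans hR hy.1
    positivity
  have hdiff : ∀ y ∈ U, HasFDerivAt u (fderiv ℝ u y) y := fun y hy =>
    ((hC2.differentiableOn (by norm_num)).differentiableAt (hU.mem_nhds hy)).hasFDerivAt
  have hfd : ContDiffOn ℝ 1 (fderiv ℝ u) U := hC2.fderiv_of_isOpen hU (by norm_num)
  have hA : HasFDerivAt (fderiv ℝ u) (fderiv ℝ (fderiv ℝ u) x₀) x₀ :=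
    ((hfd.differentiableOn one_ne_zero).differentiableAt hUx).hasFDerivAt
  have hq0 : qf w x₀ ≠ 0 := (hqpos x₀ hx₀U).ne'
  have key : ∀ i : Fin 2,
      fderiv ℝ (fun y => fderiv ℝ u y (EuclideanSpace.single i (1:ℝ))) x₀
          (EuclideanSpace.single i (1:ℝ))
        + (2*ε - c * (qf w x₀)⁻¹
            + 2*c*(x₀ i - w i)^2 * ((qf w x₀)^2)⁻¹) ≤ 0 := by
    intro i
    set e : E2 := EuclideanSpace.single i (1:ℝ) with he
    obtain ⟨DB, hB1, hB2⟩ := hasFDerivAt_B c ε w x₀ hq0 i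
    have hui : HasFDerivAt (fun y => fderiv ℝ u y e)
        ((ContinuousLinearMap.apply ℝ ℝ e).comp (fderiv ℝ (fderiv ℝ u) x₀)) x₀ := by
      have := (ContinuousLinearMap.apply ℝ ℝ e).hasFDerivAt.comp x₀ hA
      simpa [Function.comp_def] using this
    have hle : (((ContinuousLinearMap.apply ℝ ℝ e).comp (fderiv ℝ (fderiv ℝ u) x₀)) + DB) e
        ≤ 0 := by
      apply second_dir_deriv_nonpos
        (F := fun z => u z + (ε * qf w z - c/2 * Real.log (qf w z)))
        (F' := fun y => fderiv ℝ u y + (ε - c/2 * (qf w y)⁻¹) • Dqf w y) (x := x₀)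
      · filter_upwards [hUx] with y hyU
        exact ⟨(hdiff y hyU).add (hasFDerivAt_barrier c ε w y (hqpos y hyU).ne'),
          hmax y hyU.1.le hyU.2.le⟩
      · have heq : (fun y : E2 =>
            (fderiv ℝ u y + (ε - c/2 * (qf w y)⁻¹) • Dqf w y) e)
            = fun y => fderiv ℝ u y e + (ε - c/2 * (qf w y)⁻¹) * (2*(y i - w i)) := by
          funext y
          simp [he, Dqf_single]
        rw [heq]
        exact hui.add hB1
    rw [ContinuousLinearMap.add_apply, hB2] at hle
    rw [hui.fderiv]
    exact hle
  have h0 := key 0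
  have h1 := key 1
  have hqsum : (x₀ 0 - w 0)^2 + (x₀ 1 - w 1)^2 = qf w x₀ := by
    simp [qf, Fin.sum_univ_two]
  have hDBsum : (2*ε - c * (qf w x₀)⁻¹ + 2*c*(x₀ 0 - w 0)^2 * ((qf w x₀)^2)⁻¹)
      + (2*ε - c * (qf w x₀)⁻¹ + 2*c*(x₀ 1 - w 1)^2 * ((qf w x₀)^2)⁻¹) = 4*ε := by
    field_simp
    rw [← hqsum]
    ring
  have hlapl : 0 ≤ lapl u x₀ := hsub x₀ hx₀.1 hx₀.2
  have hlapl_eq : lapl u x₀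
      = fderiv ℝ (fun y => fderiv ℝ u y (EuclideanSpace.single 0 (1:ℝ))) x₀
          (EuclideanSpace.single 0 (1:ℝ))
        + fderiv ℝ (fun y => fderiv ℝ u y (EuclideanSpace.single 1 (1:ℝ))) x₀
          (EuclideanSpace.single 1 (1:ℝ)) := by
    simp [lapl, Fin.sum_univ_two]
  linarith

/-- A subharmonic function on the annulus `{R ≤ |x-w| ≤ 3R/2} ⊆ ℝ²` with `u ≤ 0` on
the inner sphere and `u ≤ M` on the outer sphere grows at most linearly away from
the inner sphere: `u(x) ≤ (M/(R log(3/2)))·(|x-w| - R)`. -/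
theorem stmt19 (R M : ℝ) (hR : 0 < R) (hM : 0 ≤ M)
    (w : EuclideanSpace ℝ (Fin 2))
    (u : EuclideanSpace ℝ (Fin 2) → ℝ)
    (hcont : ContinuousOn u {x | R ≤ ‖x - w‖ ∧ ‖x - w‖ ≤ 3*R/2})
    (hC2 : ContDiffOn ℝ 2 u {x | R < ‖x - w‖ ∧ ‖x - w‖ < 3*R/2})
    (hsub : ∀ x, R < ‖x - w‖ → ‖x - w‖ < 3*R/2 → 0 ≤ lapl u x)
    (hinner : ∀ x, ‖x - w‖ = R → u x ≤ 0)
    (houter : ∀ x, ‖x - w‖ = 3*R/2 → u x ≤ M) :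
    ∀ x, R ≤ ‖x - w‖ → ‖x - w‖ ≤ 3*R/2 →
      u x ≤ (M / (R * Real.log (3/2))) * (‖x - w‖ - R) := by
  have hlog : 0 < Real.log (3/2) := Real.log_pos (by norm_num)
  set c := M / Real.log (3/2) with hc
  have hc0 : 0 ≤ c := div_nonneg hM hlog.le
  have hMc : c * Real.log (3/2) = M := by
    rw [hc]; field_simp
  intro x hx1 hx2
  have hrpos : 0 < ‖x - w‖ := lt_of_lt_of_le hR hx1
  -- main log bound
  have main : u x ≤ c * (Real.log ‖x - w‖ - Real.log R) := by
    have happrox : ∀ ε : ℝ, 0 < ε →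
        u x ≤ c * (Real.log ‖x - w‖ - Real.log R) + ε * (3*R/2)^2 := by
      intro ε hε
      set K : Set (EuclideanSpace ℝ (Fin 2)) := {y | R ≤ ‖y - w‖ ∧ ‖y - w‖ ≤ 3*R/2} with hK
      set Fe : EuclideanSpace ℝ (Fin 2) → ℝ :=
        fun y => u y + (ε * qf w y - c/2 * Real.log (qf w y)) with hFe
      have hncont : Continuous (fun y : EuclideanSpace ℝ (Fin 2) => ‖y - w‖) :=
        (continuous_id.sub continuous_const).norm
      have hKclosed : IsClosed K := by
        have : K = {y : EuclideanSpace ℝ (Fin 2) | R ≤ ‖y - w‖} ∩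
            {y | ‖y - w‖ ≤ 3*R/2} := rfl
        rw [this]
        exact (isClosed_le continuous_const hncont).inter
          (isClosed_le hncont continuous_const)
      have hKcomp : IsCompact K := by
        apply Metric.isCompact_of_isClosed_isBounded hKclosed
        apply Metric.isBounded_closedBall (x := w) (r := 3*R/2) |>.subset
        intro y hy
        rw [Metric.mem_closedBall, dist_eq_norm]
        exact hy.2
      have hqK : ∀ y ∈ K, qf w y ≠ 0 := by
        intro y hy
        rw [qf_eq]
        have : 0 < ‖y - w‖ := lt_of_lt_of_le hR hy.1
        positivity
      have hqcont : Continuous (qf w) := by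
        unfold qf
        fun_prop
      have hFcont : ContinuousOn Fe K := by
        apply hcont.add
        exact (continuousOn_const.mul hqcont.continuousOn).sub
          (continuousOn_const.mul (hqcont.continuousOn.log hqK))
      obtain ⟨x₀, hx₀K, hx₀max⟩ := hKcomp.exists_isMaxOn ⟨x, hx1, hx2⟩ hFcont
      have hbound : Fe x₀ ≤ ε * (3*R/2)^2 - c * Real.log R := by
        rcases eq_or_lt_of_le hx₀K.1 with hre | hr1
        · -- inner boundary
          have hq : qf w x₀ = R^2 := by rw [qf_eq, ← hre]
          have hu0 : u x₀ ≤ 0 := hinner x₀ hre.symm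
          have hlq : Real.log (qf w x₀) = 2 * Real.log R := by
            rw [hq, Real.log_pow]; norm_num
          have hRsq : R^2 ≤ (3*R/2)^2 := by nlinarith
          have hlR : Real.log (R^2) = 2 * Real.log R := by
            rw [Real.log_pow]; norm_num
          rw [hFe]
          simp only [hq, hlR]
          linarith [mul_le_mul_of_nonneg_left hRsq hε.le]
        rcases eq_or_lt_of_le hx₀K.2 with hre | hr2
        · -- outer boundary
          have hq : qf w x₀ = (3*R/2)^2 := by rw [qf_eq, hre]
          have huM : u x₀ ≤ M := houter x₀ hre
          have hlq : Real.log (qf w x₀) = 2 * Real.log (3*R/2) := by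
            rw [hq, Real.log_pow]; norm_num
          have hlogdiff : Real.log (3*R/2) - Real.log R = Real.log (3/2) := by
            rw [← Real.log_div (by positivity) hR.ne']
            rw [show (3*R/2)/R = (3:ℝ)/2 by field_simp]
          have h3 : c * Real.log (3*R/2) - c * Real.log R = M := by
            rw [← hMc, ← hlogdiff]; ring
          have hlq2 : Real.log ((3*R/2)^2) = 2 * Real.log (3*R/2) := by
            rw [Real.log_pow]; norm_num
          rw [hFe]
          simp only [hq, hlq2]
          linarith
        · -- interior: contradiction
          exfalso
          exact no_interior_max R c ε hR hε w u hC2 hsub x₀ ⟨hr1, hr2⟩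
            (fun y hy1 hy2 => hx₀max ⟨hy1, hy2⟩)
      have hxK : x ∈ K := ⟨hx1, hx2⟩
      have hFex : Fe x ≤ ε * (3*R/2)^2 - c * Real.log R := le_trans (hx₀max hxK) hbound
      have hqx : qf w x = ‖x - w‖^2 := qf_eq w x
      have hlqx : Real.log (qf w x) = 2 * Real.log ‖x - w‖ := by
        rw [hqx, Real.log_pow]; norm_num
      have hqnn : 0 ≤ qf w x := by rw [hqx]; positivity
      rw [hFe] at hFex
      simp only [hlqx] at hFex
      nlinarith [mul_nonneg hε.le hqnn]
    apply le_of_forall_pos_le_add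
    intro δ hδ
    have hsq : (0:ℝ) < (3*R/2)^2 := by positivity
    have := happrox (δ / (3*R/2)^2) (div_pos hδ hsq)
    rwa [div_mul_cancel₀ _ hsq.ne'] at this
  -- concavity of log
  have hlogle : Real.log ‖x - w‖ - Real.log R ≤ (‖x - w‖ - R) / R := by
    have h1 : Real.log ‖x - w‖ - Real.log R = Real.log (‖x - w‖ / R) :=
      (Real.log_div hrpos.ne' hR.ne').symm
    have h2 : Real.log (‖x - w‖ / R) ≤ ‖x - w‖ / R - 1 :=
      Real.log_le_sub_one_of_pos (by positivity)
    rw [h1]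
    calc Real.log (‖x - w‖ / R) ≤ ‖x - w‖ / R - 1 := h2
    _ = (‖x - w‖ - R) / R := by field_simp
  have hfinal : c * ((‖x - w‖ - R) / R) = (M / (R * Real.log (3/2))) * (‖x - w‖ - R) := by
    rw [hc, mul_comm R, ← div_div]
    ring
  calc u x ≤ c * (Real.log ‖x - w‖ - Real.log R) := main
  _ ≤ c * ((‖x - w‖ - R) / R) := mul_le_mul_of_nonneg_left hlogle hc0
  _ = (M / (R * Real.log (3/2))) * (‖x - w‖ - R) := hfinal
end
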